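/- Let L be a Banach limit, (u_n) a bounded complex sequence, and (v_n) a bounded real sequence such that |v_n − c| almost converges to 0 for some real c. Then L((u_n v_n)) = c · L((u_n)). -/

import Mathlib

noncomputable section

/-- A complex sequence is bounded. -/
def IsBoundedSeq (u : ℕ → ℂ) : Prop := ∃ C : ℝ, ∀ n, ‖u n‖ ≤ C

/-- Almost convergence (Lorentz) of a complex sequence: the Cesàro averages
`(1/(n+1)) ∑_{i=k}^{k+n} u i` converge to `c` uniformly in `k`. -/
def AlmostConvergentC (u : ℕ → ℂ) (c : ℂ) : Prop :=
  ∀ ε : ℝ, 0 < ε → ∃ N : ℕ, ∀ n ≥ N, ∀ k : ℕ,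
    ‖(∑ i ∈ Finset.range (n + 1), u (k + i)) / ((n : ℂ) + 1) - c‖ < ε

/-- Almost convergence (Lorentz) of a real sequence. -/
def AlmostConvergentR (u : ℕ → ℝ) (c : ℝ) : Prop :=
  ∀ ε : ℝ, 0 < ε → ∃ N : ℕ, ∀ n ≥ N, ∀ k : ℕ,
    |(∑ i ∈ Finset.range (n + 1), u (k + i)) / ((n : ℝ) + 1) - c| < ε

/-- A Banach limit: a shift-invariant positive linear functional on `ℓ^∞(ℕ, ℂ)`
with `L(1) = 1 = ‖L‖`. -/
structure BanachLimit where
  toFun : (ℕ → ℂ) → ℂ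
  map_add' : ∀ u v : ℕ → ℂ, IsBoundedSeq u → IsBoundedSeq v →
    toFun (u + v) = toFun u + toFun v
  map_smul' : ∀ (a : ℂ) (u : ℕ → ℂ), IsBoundedSeq u → toFun (a • u) = a * toFun u
  norm_le' : ∀ (u : ℕ → ℂ) (C : ℝ), (∀ n, ‖u n‖ ≤ C) → ‖toFun u‖ ≤ C
  map_one' : toFun (fun _ => 1) = 1
  shift' : ∀ u : ℕ → ℂ, IsBoundedSeq u → toFun (fun n => u (n + 1)) = toFun u
  pos' : ∀ u : ℕ → ℂ, (∀ n, ∃ r : ℝ, 0 ≤ r ∧ u n = (r : ℂ)) →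
    ∃ r : ℝ, 0 ≤ r ∧ toFun u = (r : ℂ)

/-- A gauge with constant `c`: `p : ℕ → (0,∞)` with `p(n+1)/p(n)` strongly almost
convergent to `c > 0`. -/
def IsGauge (p : ℕ → ℝ) (c : ℝ) : Prop :=
  (∀ n, 0 < p n) ∧ 0 < c ∧ AlmostConvergentR (fun n => |p (n + 1) / p n - c|) 0

lemma IsBoundedSeq.shift {w : ℕ → ℂ} (hw : IsBoundedSeq w) (j : ℕ) :
    IsBoundedSeq (fun n => w (n + j)) := by
  obtain ⟨C, hC⟩ := hw
  exact ⟨C, fun n => hC _⟩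

lemma banachLimit_map_zero (L : BanachLimit) : L.toFun (fun _ => 0) = 0 := by
  have := L.map_smul' 0 (fun _ => 1) ⟨1, fun n => by simp⟩
  have h0 : L.toFun 0 = 0 := by simpa [Pi.smul_def] using this
  exact h0

lemma banachLimit_shift_iter (L : BanachLimit) (w : ℕ → ℂ) (hw : IsBoundedSeq w) (j : ℕ) :
    L.toFun (fun n => w (n + j)) = L.toFun w := by
  induction j with
  | zero => simp
  | succ j ih =>
    have := L.shift' (fun n => w (n + j)) (hw.shift j)
    rw [← ih, ← this]
    congr 1
    funext n
    congr 1
    omega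

lemma banachLimit_sum_shifts (L : BanachLimit) (w : ℕ → ℂ) (C : ℝ)
    (hC : ∀ n, ‖w n‖ ≤ C) (m : ℕ) :
    L.toFun (fun k => ∑ i ∈ Finset.range m, w (k + i)) = m * L.toFun w := by
  induction m with
  | zero => simpa using banachLimit_map_zero L
  | succ m ih =>
    have hb1 : IsBoundedSeq (fun k => ∑ i ∈ Finset.range m, w (k + i)) := by
      refine ⟨m * C, fun k => ?_⟩
      calc ‖∑ i ∈ Finset.range m, w (k + i)‖
          ≤ ∑ i ∈ Finset.range m, ‖w (k + i)‖ := norm_sum_le _ _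
        _ ≤ ∑ _i ∈ Finset.range m, C := Finset.sum_le_sum (fun i _ => hC _)
        _ = m * C := by simp [mul_comm]
    have hb2 : IsBoundedSeq (fun k => w (k + m)) := IsBoundedSeq.shift ⟨C, hC⟩ m
    have hadd := L.map_add' (fun k => ∑ i ∈ Finset.range m, w (k + i))
      (fun k => w (k + m)) hb1 hb2
    have heq : (fun k => ∑ i ∈ Finset.range (m + 1), w (k + i)) =
        (fun k => ∑ i ∈ Finset.range m, w (k + i)) + (fun k => w (k + m)) := by
      funext k
      simp [Finset.sum_range_succ]
    rw [heq, hadd, ih, banachLimit_shift_iter L w ⟨C, hC⟩ m]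
    push_cast
    ring

lemma banachLimit_vanish (L : BanachLimit) (u : ℕ → ℂ) (v : ℕ → ℝ) (c : ℝ)
    (hu : IsBoundedSeq u) (hv : ∃ C : ℝ, ∀ n, |v n| ≤ C)
    (h : AlmostConvergentR (fun n => |v n - c|) 0) :
    L.toFun (fun n => u n * ((v n : ℂ) - c)) = 0 := by
  obtain ⟨Cu, hCu⟩ := hu
  obtain ⟨Cv, hCv⟩ := hv
  set Cu' : ℝ := max Cu 0 with hCu'
  have hCu'nn : 0 ≤ Cu' := le_max_right _ _
  have hCu'b : ∀ n, ‖u n‖ ≤ Cu' := fun n => le_trans (hCu n) (le_max_left _ _)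
  set w : ℕ → ℂ := fun n => u n * ((v n : ℂ) - c) with hw
  have hwb : ∀ n, ‖w n‖ ≤ Cu' * (Cv + |c|) := by
    intro n
    have : ‖w n‖ = ‖u n‖ * |v n - c| := by
      rw [hw]
      simp only [norm_mul]
      congr 1
      rw [show ((v n : ℂ) - c) = ((v n - c : ℝ) : ℂ) by push_cast; ring]
      exact Complex.norm_real _
    rw [this]
    have h1 : |v n - c| ≤ Cv + |c| := by
      have := abs_sub (v n) c
      have := hCv n
      calc |v n - c| ≤ |v n| + |c| := abs_sub _ _
        _ ≤ Cv + |c| := by linarith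
    exact mul_le_mul (hCu'b n) h1 (abs_nonneg _) hCu'nn
  have key : ∀ ε : ℝ, 0 < ε → ‖L.toFun w‖ < ε := by
    intro ε hε
    have hε' : 0 < ε / (Cu' + 1) := by positivity
    obtain ⟨N, hN⟩ := h (ε / (Cu' + 1)) hε'
    set a : ℂ := ((N : ℂ) + 1)⁻¹ with ha
    set g : ℕ → ℂ := fun k => ∑ i ∈ Finset.range (N + 1), w (k + i) with hg
    have hgb : IsBoundedSeq g := by
      refine ⟨(N + 1) * (Cu' * (Cv + |c|)), fun k => ?_⟩
      calc ‖g k‖ ≤ ∑ i ∈ Finset.range (N + 1), ‖w (k + i)‖ := norm_sum_le _ _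
        _ ≤ ∑ _i ∈ Finset.range (N + 1), (Cu' * (Cv + |c|)) :=
            Finset.sum_le_sum (fun i _ => hwb _)
        _ = (N + 1) * (Cu' * (Cv + |c|)) := by push_cast; simp [mul_comm]
    have hLg : L.toFun (a • g) = L.toFun w := by
      rw [L.map_smul' a g hgb,
        banachLimit_sum_shifts L w (Cu' * (Cv + |c|)) hwb (N + 1)]
      have hne : ((N : ℂ) + 1) ≠ 0 := Nat.cast_add_one_ne_zero N
      push_cast
      field_simp [ha]
      rw [ha, inv_mul_cancel₀ hne, one_mul]
    have hbound : ∀ k, ‖(a • g) k‖ ≤ Cu' * (ε / (Cu' + 1)) := by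
      intro k
      have hNk := hN N le_rfl k
      simp only [sub_zero] at hNk
      have hsum_nn : 0 ≤ ∑ i ∈ Finset.range (N + 1), |v (k + i) - c| :=
        Finset.sum_nonneg (fun i _ => abs_nonneg _)
      have hNpos : (0 : ℝ) < (N : ℝ) + 1 := by positivity
      have hNk' : (∑ i ∈ Finset.range (N + 1), |v (k + i) - c|) / ((N : ℝ) + 1)
          < ε / (Cu' + 1) := by
        have : |(∑ i ∈ Finset.range (N + 1), |v (k + i) - c|) / ((N : ℝ) + 1)|
            = (∑ i ∈ Finset.range (N + 1), |v (k + i) - c|) / ((N : ℝ) + 1) := by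
          rw [abs_of_nonneg (div_nonneg hsum_nn hNpos.le)]
        rw [← this]
        exact hNk
      have h1 : ‖(a • g) k‖ = ‖g k‖ / ((N : ℝ) + 1) := by
        simp only [Pi.smul_apply, smul_eq_mul, norm_mul, ha]
        rw [norm_inv]
        have : ‖(N : ℂ) + 1‖ = (N : ℝ) + 1 := by
          rw [show ((N : ℂ) + 1) = (((N + 1 : ℕ)) : ℂ) by push_cast; ring,
            Complex.norm_natCast]
          push_cast; ring
        rw [this]
        ring
      rw [h1]
      have h2 : ‖g k‖ ≤ Cu' * ∑ i ∈ Finset.range (N + 1), |v (k + i) - c| := by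
        calc ‖g k‖ ≤ ∑ i ∈ Finset.range (N + 1), ‖w (k + i)‖ := norm_sum_le _ _
          _ ≤ ∑ i ∈ Finset.range (N + 1), Cu' * |v (k + i) - c| := by
              refine Finset.sum_le_sum (fun i _ => ?_)
              have : ‖w (k + i)‖ = ‖u (k + i)‖ * |v (k + i) - c| := by
                rw [hw]
                simp only [norm_mul]
                congr 1
                rw [show ((v (k+i) : ℂ) - c) = ((v (k+i) - c : ℝ) : ℂ) by push_cast; ring]
                exact Complex.norm_real _
              rw [this]
              exact mul_le_mul_of_nonneg_right (hCu'b _) (abs_nonneg _)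
          _ = Cu' * ∑ i ∈ Finset.range (N + 1), |v (k + i) - c| := by
              rw [Finset.mul_sum]
      calc ‖g k‖ / ((N : ℝ) + 1)
          ≤ Cu' * (∑ i ∈ Finset.range (N + 1), |v (k + i) - c|) / ((N : ℝ) + 1) := by
            gcongr
        _ = Cu' * ((∑ i ∈ Finset.range (N + 1), |v (k + i) - c|) / ((N : ℝ) + 1)) := by
            ring
        _ ≤ Cu' * (ε / (Cu' + 1)) :=
            mul_le_mul_of_nonneg_left hNk'.le hCu'nn
    have := L.norm_le' (a • g) (Cu' * (ε / (Cu' + 1))) hbound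
    rw [hLg] at this
    calc ‖L.toFun w‖ ≤ Cu' * (ε / (Cu' + 1)) := this
      _ < (Cu' + 1) * (ε / (Cu' + 1)) := by
          apply mul_lt_mul_of_pos_right (by linarith) hε'
      _ = ε := by field_simp
  have h0 : ‖L.toFun w‖ ≤ 0 := by
    by_contra hlt
    push_neg at hlt
    exact absurd (key _ hlt) (lt_irrefl _)
  exact norm_le_zero_iff.mp h0

/-- If `(v n)` is a bounded real sequence with `|v n - c|` almost convergent to `0`,
then `L((u n * v n)) = c * L((u n))` for every Banach limit `L` and every bounded
complex sequence `(u n)`. -/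
theorem banachLimit_mul_stronglyAlmostConvergent (L : BanachLimit)
    (u : ℕ → ℂ) (v : ℕ → ℝ) (c : ℝ)
    (hu : IsBoundedSeq u) (hv : ∃ C : ℝ, ∀ n, |v n| ≤ C)
    (h : AlmostConvergentR (fun n => |v n - c|) 0) :
    L.toFun (fun n => u n * (v n : ℂ)) = (c : ℂ) * L.toFun u := by
  have hvanish := banachLimit_vanish L u v c hu hv h
  obtain ⟨Cu, hCu⟩ := hu
  obtain ⟨Cv, hCv⟩ := hv
  have hb1 : IsBoundedSeq (fun n => u n * ((v n : ℂ) - c)) := by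
    refine ⟨Cu * (Cv + |c|) + |Cu| * (Cv + |c|), fun n => ?_⟩
    have h1 : ‖(v n : ℂ) - c‖ ≤ Cv + |c| := by
      rw [show ((v n : ℂ) - c) = ((v n - c : ℝ) : ℂ) by push_cast; ring,
        Complex.norm_real]
      calc |v n - c| ≤ |v n| + |c| := abs_sub _ _
        _ ≤ Cv + |c| := by have := hCv n; linarith
    have h2 : (0:ℝ) ≤ Cv + |c| := le_trans (norm_nonneg _) h1
    rw [norm_mul]
    nlinarith [norm_nonneg (u n), hCu n, norm_nonneg ((v n : ℂ) - c),
      mul_le_mul (hCu n) h1 (norm_nonneg _) (le_trans (norm_nonneg (u 0)) (hCu 0)),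
      abs_nonneg Cu, le_abs_self Cu]
  have hb2 : IsBoundedSeq ((c : ℂ) • u) := by
    refine ⟨|c| * Cu, fun n => ?_⟩
    simp only [Pi.smul_apply, smul_eq_mul, norm_mul, Complex.norm_real]
    exact mul_le_mul_of_nonneg_left (hCu n) (abs_nonneg _)
  have heq : (fun n => u n * (v n : ℂ)) =
      (fun n => u n * ((v n : ℂ) - c)) + (c : ℂ) • u := by
    funext n
    simp only [Pi.add_apply, Pi.smul_apply, smul_eq_mul]
    ring
  rw [heq, L.map_add' _ _ hb1 hb2, hvanish, L.map_smul' _ _ ⟨Cu, hCu⟩]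
  ring
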